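/- arXiv:2205.14016 — 7 statements merged into one kernel-verified Lean document; each statement's English description precedes it below -/
import Mathlib

section
/- Fix a constant C > 0 and define g(τ) = ∫_{τ-C}^∞ e^{-t²/2} dt and h(τ) = ∫_τ^∞ e^{-t²/2} dt. Then the ratio f(τ) = g(τ)/h(τ) is strictly increasing in τ on ℝ. -/
open Real MeasureTheory

private lemma gauss_integrable : Integrable (fun t : ℝ => Real.exp (-t ^ 2 / 2)) := by
  have h := integrable_exp_neg_mul_sq (b := (1/2 : ℝ)) (by norm_num)
  convert h using 2 with t
  ring_nf

private lemma gauss_cont : Continuous (fun t : ℝ => Real.exp (-t ^ 2 / 2)) := by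
  continuity

private lemma tail_pos (τ : ℝ) : 0 < ∫ t in Set.Ioi τ, Real.exp (-t ^ 2 / 2) := by
  rw [setIntegral_pos_iff_support_of_nonneg_ae]
  · have : Function.support (fun t : ℝ => Real.exp (-t ^ 2 / 2)) = Set.univ := by
      ext t; simp [Real.exp_ne_zero]
    rw [this, Set.univ_inter]
    simp
  · filter_upwards with t using (Real.exp_pos _).le
  · exact gauss_integrable.integrableOn

private lemma tail_hasDerivAt (τ : ℝ) :
    HasDerivAt (fun τ : ℝ => ∫ t in Set.Ioi τ, Real.exp (-t ^ 2 / 2))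
      (-Real.exp (-τ ^ 2 / 2)) τ := by
  have key : ∀ x : ℝ, (∫ t in Set.Ioi x, Real.exp (-t ^ 2 / 2)) =
      (∫ t, Real.exp (-t ^ 2 / 2)) - ((∫ t in Set.Iic (0:ℝ), Real.exp (-t ^ 2 / 2))
        + ∫ t in (0:ℝ)..x, Real.exp (-t ^ 2 / 2)) := by
    intro x
    have h1 : (∫ t in Set.Iic x, Real.exp (-t ^ 2 / 2)) +
        (∫ t in Set.Ioi x, Real.exp (-t ^ 2 / 2)) = ∫ t, Real.exp (-t ^ 2 / 2) :=
      intervalIntegral.integral_Iic_add_Ioi gauss_integrable.integrableOn gauss_integrable.integrableOn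
    have h2 : (∫ t in Set.Iic x, Real.exp (-t ^ 2 / 2)) -
        (∫ t in Set.Iic (0:ℝ), Real.exp (-t ^ 2 / 2)) =
        ∫ t in (0:ℝ)..x, Real.exp (-t ^ 2 / 2) :=
      intervalIntegral.integral_Iic_sub_Iic gauss_integrable.integrableOn
        gauss_integrable.integrableOn
    linarith
  have hd : HasDerivAt (fun u : ℝ => ∫ t in (0:ℝ)..u, Real.exp (-t ^ 2 / 2))
      (Real.exp (-τ ^ 2 / 2)) τ :=
    intervalIntegral.integral_hasDerivAt_right
      (gauss_integrable.intervalIntegrable)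
      (gauss_cont.stronglyMeasurableAtFilter _ _)
      gauss_cont.continuousAt
  have : HasDerivAt (fun x : ℝ => (∫ t, Real.exp (-t ^ 2 / 2)) -
      ((∫ t in Set.Iic (0:ℝ), Real.exp (-t ^ 2 / 2))
        + ∫ t in (0:ℝ)..x, Real.exp (-t ^ 2 / 2)))
      (-Real.exp (-τ ^ 2 / 2)) τ := by
    simpa [Pi.sub_def, Pi.add_def] using ((hasDerivAt_const τ _).sub ((hasDerivAt_const τ _).add hd))
  exact this.congr_of_eventuallyEq (Filter.Eventually.of_forall key)

private lemma tail_shift (τ C : ℝ) :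
    (∫ t in Set.Ioi τ, Real.exp (-t ^ 2 / 2)) =
      ∫ s in Set.Ioi (τ - C), Real.exp (-(s + C) ^ 2 / 2) := by
  have hmp : MeasurePreserving (fun x : ℝ => x + C) volume volume :=
    measurePreserving_add_right volume C
  have hemb : MeasurableEmbedding (fun x : ℝ => x + C) :=
    (MeasurableEquiv.addRight C).measurableEmbedding
  have := hmp.setIntegral_preimage_emb hemb
    (fun t => Real.exp (-t ^ 2 / 2)) (Set.Ioi τ)
  have hpre : (fun x : ℝ => x + C) ⁻¹' Set.Ioi τ = Set.Ioi (τ - C) := by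
    ext x; simp [Set.mem_Ioi, sub_lt_iff_lt_add, lt_sub_iff_add_lt]
  rw [hpre] at this
  exact this.symm

theorem shifted_tail_ratio_strictMono (C : ℝ) (hC : 0 < C) :
    StrictMono (fun τ : ℝ =>
      (∫ t in Set.Ioi (τ - C), Real.exp (-t ^ 2 / 2)) /
      (∫ t in Set.Ioi τ, Real.exp (-t ^ 2 / 2))) := by
  set Φ : ℝ → ℝ := fun τ => ∫ t in Set.Ioi τ, Real.exp (-t ^ 2 / 2) with hΦ
  have hΦpos : ∀ τ, 0 < Φ τ := tail_pos
  apply strictMono_of_deriv_pos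
  intro τ
  have hg : HasDerivAt (fun τ : ℝ => Φ (τ - C)) (-Real.exp (-(τ - C) ^ 2 / 2)) τ := by
    simpa [Function.comp_def] using (tail_hasDerivAt (τ - C)).comp τ ((hasDerivAt_id τ).sub_const C)
  have hh : HasDerivAt Φ (-Real.exp (-τ ^ 2 / 2)) τ := tail_hasDerivAt τ
  have hdiv : HasDerivAt (fun τ : ℝ => Φ (τ - C) / Φ τ)
      ((-Real.exp (-(τ - C) ^ 2 / 2) * Φ τ - Φ (τ - C) * (-Real.exp (-τ ^ 2 / 2))) / (Φ τ) ^ 2)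
      τ := hg.div hh (hΦpos τ).ne'
  rw [show (fun τ : ℝ => (∫ t in Set.Ioi (τ - C), Real.exp (-t ^ 2 / 2)) /
      (∫ t in Set.Ioi τ, Real.exp (-t ^ 2 / 2))) = fun τ : ℝ => Φ (τ - C) / Φ τ from rfl,
    hdiv.deriv]
  apply div_pos _ (pow_pos (hΦpos τ) 2)
  have key : Real.exp (-(τ - C) ^ 2 / 2) * Φ τ < Real.exp (-τ ^ 2 / 2) * Φ (τ - C) := by
    have h1 : Real.exp (-(τ - C) ^ 2 / 2) * Φ τ =
        ∫ s in Set.Ioi (τ - C), Real.exp (-(τ - C) ^ 2 / 2) * Real.exp (-(s + C) ^ 2 / 2) := by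
      simp only [hΦ]
      rw [tail_shift τ C, ← integral_const_mul]
    have h2 : Real.exp (-τ ^ 2 / 2) * Φ (τ - C) =
        ∫ s in Set.Ioi (τ - C), Real.exp (-τ ^ 2 / 2) * Real.exp (-s ^ 2 / 2) := by
      simp only [hΦ]
      rw [← integral_const_mul]
    rw [h1, h2, ← sub_pos, ← integral_sub]
    · rw [setIntegral_pos_iff_support_of_nonneg_ae]
      · have hsub : Set.Ioi (τ - C) ⊆ Function.support (fun s : ℝ =>
            Real.exp (-τ ^ 2 / 2) * Real.exp (-s ^ 2 / 2) -
            Real.exp (-(τ - C) ^ 2 / 2) * Real.exp (-(s + C) ^ 2 / 2)) := by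
          intro s hs
          have hlt : Real.exp (-(τ - C) ^ 2 / 2) * Real.exp (-(s + C) ^ 2 / 2) <
              Real.exp (-τ ^ 2 / 2) * Real.exp (-s ^ 2 / 2) := by
            rw [← Real.exp_add, ← Real.exp_add]
            apply Real.exp_lt_exp.mpr
            have : τ - C < s := hs
            nlinarith [hC]
          simp only [Function.mem_support]
          exact sub_ne_zero.mpr (ne_of_gt hlt)
        have : volume (Function.support (fun s : ℝ =>
            Real.exp (-τ ^ 2 / 2) * Real.exp (-s ^ 2 / 2) -
            Real.exp (-(τ - C) ^ 2 / 2) * Real.exp (-(s + C) ^ 2 / 2)) ∩ Set.Ioi (τ - C)) =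
            volume (Set.Ioi (τ - C)) := by
          rw [Set.inter_eq_right.mpr hsub]
        rw [this]
        simp
      · rw [Filter.EventuallyLE, ae_restrict_iff' measurableSet_Ioi]
        filter_upwards with s hs
        have hle : Real.exp (-(τ - C) ^ 2 / 2) * Real.exp (-(s + C) ^ 2 / 2) ≤
            Real.exp (-τ ^ 2 / 2) * Real.exp (-s ^ 2 / 2) := by
          rw [← Real.exp_add, ← Real.exp_add]
          apply Real.exp_le_exp.mpr
          have : τ - C < s := hs
          nlinarith [hC]
        simpa using sub_nonneg.mpr hle
      · apply Integrable.sub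
        · exact (gauss_integrable.const_mul _).integrableOn
        · have : Integrable (fun s : ℝ => Real.exp (-(s + C) ^ 2 / 2)) := by
            have := gauss_integrable.comp_add_right C
            simpa using this
          exact (this.const_mul _).integrableOn
    · exact (gauss_integrable.const_mul _).integrableOn
    · have : Integrable (fun s : ℝ => Real.exp (-(s + C) ^ 2 / 2)) := by
        have := gauss_integrable.comp_add_right C
        simpa using this
      exact (this.const_mul _).integrableOn
  nlinarith [key]
end

section
/- For 0 < α < γ < 1 and n ≥ 1 a positive integer, the likelihood ratio (1-(1-γ)^n)/(1-(1-α)^n) is strictly greater than 1 and is strictly decreasing in n. -/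
private lemma pow_sub_pow_ge (a b : ℝ) (ha : 0 < a) (hab : a ≤ b) :
    ∀ m : ℕ, (m + 1 : ℝ) * a ^ m * (b - a) ≤ b ^ (m + 1) - a ^ (m + 1) := by
  intro m
  induction m with
  | zero => simp
  | succ m ih =>
    have hb : 0 < b := lt_of_lt_of_le ha hab
    have hpa : 0 < a ^ m := pow_pos ha m
    have h2 : b * ((m + 1 : ℝ) * a ^ m * (b - a)) ≤ b * (b ^ (m + 1) - a ^ (m + 1)) :=
      mul_le_mul_of_nonneg_left ih hb.le
    have h3 : a * ((m + 1 : ℝ) * a ^ m * (b - a)) ≤ b * ((m + 1 : ℝ) * a ^ m * (b - a)) :=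
      mul_le_mul_of_nonneg_right hab
        (mul_nonneg (by positivity) (by linarith))
    have e1 : b ^ (m + 1 + 1) - a ^ (m + 1 + 1)
        = b * (b ^ (m + 1) - a ^ (m + 1)) + (b - a) * a ^ (m + 1) := by ring
    have e2 : ((m : ℝ) + 1 + 1) * a ^ (m + 1) * (b - a)
        = a * ((m + 1 : ℝ) * a ^ m * (b - a)) + (b - a) * a ^ (m + 1) := by ring
    push_cast
    rw [e1, e2]
    linarith

theorem atLeastOne_likelihood_ratio (α γ : ℝ) (hα : 0 < α) (hαγ : α < γ) (hγ : γ < 1)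
    (n : ℕ) (hn : 1 ≤ n) :
    1 < (1 - (1 - γ) ^ n) / (1 - (1 - α) ^ n) ∧
    (1 - (1 - γ) ^ (n + 1)) / (1 - (1 - α) ^ (n + 1)) <
      (1 - (1 - γ) ^ n) / (1 - (1 - α) ^ n) := by
  set a := 1 - γ with ha_def
  set b := 1 - α with hb_def
  have ha : 0 < a := by simp only [ha_def]; linarith
  have hab : a < b := by simp only [ha_def, hb_def]; linarith
  have hb1 : b < 1 := by simp only [hb_def]; linarith
  have hb : 0 < b := ha.trans hab
  obtain ⟨m, rfl⟩ : ∃ m, n = m + 1 := ⟨n - 1, (Nat.succ_pred_eq_of_pos hn).symm⟩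
  have hbn : b ^ (m + 1) < 1 := pow_lt_one₀ hb.le hb1 (Nat.succ_ne_zero m)
  have hbn2 : b ^ (m + 2) < 1 := pow_lt_one₀ hb.le hb1 (Nat.succ_ne_zero _)
  have hpan : a ^ (m + 1) < b ^ (m + 1) :=
    pow_lt_pow_left₀ hab ha.le (Nat.succ_ne_zero m)
  have hd1 : 0 < 1 - b ^ (m + 1) := by linarith
  have hd2 : 0 < 1 - b ^ (m + 2) := by linarith
  constructor
  · rw [lt_div_iff₀ hd1]
    linarith
  · rw [div_lt_div_iff₀ hd2 hd1]
    have hgeom : (m + 1 : ℝ) * a ^ m * (b - a) ≤ b ^ (m + 1) - a ^ (m + 1) :=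
      pow_sub_pow_ge a b ha hab.le m
    have hber : 1 - b ^ (m + 1) ≤ (m + 1 : ℝ) * (1 - b) := by
      have h := one_add_mul_le_pow (a := b - 1) (by linarith) (m + 1)
      have hbb : (1 + (b - 1)) = b := by ring
      rw [hbb] at h
      push_cast at h ⊢
      linarith
    have hpa : 0 < a ^ m := pow_pos ha m
    have haa : a ^ (m + 1) < a ^ m := by
      have : a ^ (m + 1) = a ^ m * a := by ring
      nlinarith
    have hD : (1 - a ^ (m + 1)) * (1 - b ^ (m + 2)) -
        (1 - a ^ (m + 2)) * (1 - b ^ (m + 1)) =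
        (1 - b) * (b ^ (m + 1) - a ^ (m + 1)) -
          a ^ (m + 1) * (b - a) * (1 - b ^ (m + 1)) := by ring
    have h4 : (1 - b) * ((m + 1 : ℝ) * a ^ m * (b - a)) ≤
        (1 - b) * (b ^ (m + 1) - a ^ (m + 1)) :=
      mul_le_mul_of_nonneg_left hgeom (by linarith)
    have h5 : a ^ (m + 1) * (b - a) * (1 - b ^ (m + 1)) ≤
        a ^ (m + 1) * (b - a) * ((m + 1 : ℝ) * (1 - b)) :=
      mul_le_mul_of_nonneg_left hber
        (mul_nonneg (pow_pos ha _).le (by linarith))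
    have hP : 0 < ((m : ℝ) + 1) * ((1 - b) * ((b - a) * (a ^ m - a ^ (m + 1)))) := by
      apply mul_pos (by positivity)
      apply mul_pos (by linarith)
      exact mul_pos (by linarith) (by linarith)
    nlinarith [hD, h4, h5, hP]
end

section
/- Let κ, β, c_w > 0 and 0 < α_w < γ_w < 1, 0 < α_S < γ_S < 1 with γ_S/α_S > γ_w/α_w. Define the likelihood ratio L(j,k) = (γ_w/α_w)^j (γ_S/α_S)^k ((β + α_S + c_w α_w)/(β + γ_S + c_w γ_w))^{j+k+κ}. Then L(j+1,k) < L(j,k) for all nonnegative integers j, k if and only if β < (γ_S α_w - γ_w α_S)/(γ_w - α_w). -/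
open Real

theorem improvable_evidence_iff (κ β cw αw γw αS γS : ℝ) (hκ : 0 < κ) (hβ : 0 < β)
    (hcw : 0 < cw) (hαw : 0 < αw) (hwγ : αw < γw) (hγw1 : γw < 1)
    (hαS : 0 < αS) (hSγ : αS < γS) (hγS1 : γS < 1)
    (hstr : γw / αw < γS / αS) :
    (∀ j k : ℕ,
      (γw / αw) ^ (j+1) * (γS / αS) ^ k *
        ((β + αS + cw * αw) / (β + γS + cw * γw)) ^ ((j:ℝ) + 1 + k + κ) <
      (γw / αw) ^ j * (γS / αS) ^ k *
        ((β + αS + cw * αw) / (β + γS + cw * γw)) ^ ((j:ℝ) + k + κ))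
    ↔ β < (γS * αw - γw * αS) / (γw - αw) := by
  have hγw : (0:ℝ) < γw := hαw.trans hwγ
  have hγS : (0:ℝ) < γS := hαS.trans hSγ
  have hA : (0:ℝ) < β + αS + cw * αw := by positivity
  have hB : (0:ℝ) < β + γS + cw * γw := by positivity
  set r : ℝ := (β + αS + cw * αw) / (β + γS + cw * γw) with hr
  have hrpos : 0 < r := div_pos hA hB
  have key : ∀ j k : ℕ,
      ((γw / αw) ^ (j+1) * (γS / αS) ^ k * r ^ ((j:ℝ) + 1 + k + κ) <
       (γw / αw) ^ j * (γS / αS) ^ k * r ^ ((j:ℝ) + k + κ))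
      ↔ (γw / αw) * r < 1 := by
    intro j k
    have hX : 0 < (γw / αw) ^ j * (γS / αS) ^ k * r ^ ((j:ℝ) + k + κ) := by
      have h1 : 0 < (γw / αw) := div_pos hγw hαw
      have h2 : 0 < (γS / αS) := div_pos hγS hαS
      positivity
    have hre : r ^ ((j:ℝ) + 1 + k + κ) = r ^ ((j:ℝ) + k + κ) * r := by
      rw [show (j:ℝ) + 1 + k + κ = ((j:ℝ) + k + κ) + 1 by ring,
        Real.rpow_add hrpos, Real.rpow_one]
    have hpe : (γw / αw) ^ (j+1) = (γw / αw) ^ j * (γw / αw) := pow_succ _ _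
    rw [hre, hpe]
    rw [show (γw / αw) ^ j * (γw / αw) * (γS / αS) ^ k * (r ^ ((j:ℝ) + k + κ) * r)
        = ((γw / αw) * r) * ((γw / αw) ^ j * (γS / αS) ^ k * r ^ ((j:ℝ) + k + κ)) by ring]
    exact mul_lt_iff_lt_one_left hX
  have harith : (γw / αw) * r < 1 ↔ β < (γS * αw - γw * αS) / (γw - αw) := by
    rw [hr, div_mul_div_comm, div_lt_one (by positivity), lt_div_iff₀ (by linarith)]
    constructor <;> intro h <;> nlinarith
  constructor
  · intro h
    exact harith.mp ((key 0 0).mp (h 0 0))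
  · intro h j k
    exact (key j k).mpr (harith.mpr h)
end

section
/- Under the conditions 0 < α_w < γ_w, 0 < α_S < γ_S, γ_S/α_S > γ_w/α_w > 1, c_w > 0, and 0 < β < (γ_S α_w - γ_w α_S)/(γ_w - α_w), the interest-I observation framework with Gamma(κ, β) prior (κ > 0) satisfies: for all j, k ≥ 0 and any prior 0 < P(H) < 1, the posterior probability P(H | O_{j+1,k}) < P(H | O_{j,k}). -/
open Real MeasureTheory

/-- Probability of observing exactly `j` weak and `k` strong successes, in the
interest-`I` observation framework with a `Gamma(κ, β)` interest prior, where
weak and strong studies are attempted at Poisson rates `cw * I` and `I` and each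
succeeds with probabilities `pw` (weak) and `pS` (strong): the interest level is
integrated against the Gamma density, and by Poisson thinning the numbers of
weak and strong successes are independent Poissons of means `cw * pw * I` and
`pS * I`. -/
noncomputable def obsProb (κ β cw pw pS : ℝ) (j k : ℕ) : ℝ :=
  ∫ I in Set.Ioi (0:ℝ),
    (β ^ κ / Real.Gamma κ) * I ^ (κ - 1) * Real.exp (-(β * I)) *
    (Real.exp (-(pS * I)) * (pS * I) ^ k / k.factorial) *
    (Real.exp (-(cw * pw * I)) * (cw * pw * I) ^ j / j.factorial)

lemma obsProb_eq (κ β cw pw pS : ℝ) (hκ : 0 < κ) (hβ : 0 < β)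
    (hw : 0 < cw * pw) (hS : 0 < pS) (j k : ℕ) :
    obsProb κ β cw pw pS j k =
      ((β ^ κ / Real.Gamma κ) * (pS ^ k / k.factorial) * ((cw * pw) ^ j / j.factorial) *
        Real.Gamma (κ + ((j + k : ℕ) : ℝ))) *
        (1 / (β + pS + cw * pw)) ^ (κ + ((j + k : ℕ) : ℝ)) := by
  have hs : 0 < β + pS + cw * pw := by linarith
  have ha : 0 < κ + ((j + k : ℕ) : ℝ) := by positivity
  unfold obsProb
  have hcong : (∫ I in Set.Ioi (0:ℝ),
      (β ^ κ / Real.Gamma κ) * I ^ (κ - 1) * Real.exp (-(β * I)) *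
      (Real.exp (-(pS * I)) * (pS * I) ^ k / k.factorial) *
      (Real.exp (-(cw * pw * I)) * (cw * pw * I) ^ j / j.factorial)) =
      ∫ I in Set.Ioi (0:ℝ),
        ((β ^ κ / Real.Gamma κ) * (pS ^ k / k.factorial) * ((cw * pw) ^ j / j.factorial)) *
        (I ^ (κ + ((j + k : ℕ) : ℝ) - 1) * Real.exp (-((β + pS + cw * pw) * I))) := by
    refine setIntegral_congr_fun measurableSet_Ioi (fun t ht => ?_)
    have ht0 : (0:ℝ) < t := ht
    rw [show κ + ((j + k : ℕ) : ℝ) - 1 = (κ - 1) + ((j + k : ℕ) : ℝ) by ring,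
      Real.rpow_add ht0, Real.rpow_natCast,
      show -((β + pS + cw * pw) * t) = -(β * t) + (-(pS * t) + -(cw * pw * t)) by ring,
      Real.exp_add, Real.exp_add]
    ring
  rw [hcong, MeasureTheory.integral_const_mul,
    Real.integral_rpow_mul_exp_neg_mul_Ioi ha hs]
  ring

lemma obsProb_pos (κ β cw pw pS : ℝ) (hκ : 0 < κ) (hβ : 0 < β)
    (hw : 0 < cw * pw) (hS : 0 < pS) (j k : ℕ) :
    0 < obsProb κ β cw pw pS j k := by
  rw [obsProb_eq κ β cw pw pS hκ hβ hw hS j k]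
  have ha : 0 < κ + ((j + k : ℕ) : ℝ) := by positivity
  have h1 := Real.Gamma_pos_of_pos hκ
  have h2 := Real.Gamma_pos_of_pos ha
  positivity

lemma posterior_lt (a b a' b' pH : ℝ) (ha : 0 < a) (hb : 0 < b) (ha' : 0 < a')
    (hb' : 0 < b') (h0 : 0 < pH) (h1 : pH < 1) (key : a * b' < a' * b) :
    pH * a / (pH * a + (1 - pH) * b) < pH * a' / (pH * a' + (1 - pH) * b') := by
  have hd1 : 0 < pH * a + (1 - pH) * b := by nlinarith
  have hd2 : 0 < pH * a' + (1 - pH) * b' := by nlinarith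
  rw [div_lt_div_iff₀ hd1 hd2]
  nlinarith [mul_pos h0 (sub_pos.mpr h1)]

theorem improvable_evidence_paradox (κ β cw αw γw αS γS pH : ℝ)
    (hκ : 0 < κ) (hcw : 0 < cw)
    (hαw : 0 < αw) (hwγ : αw < γw) (hγw1 : γw < 1)
    (hαS : 0 < αS) (hSγ : αS < γS) (hγS1 : γS < 1)
    (hstr : γw / αw < γS / αS) (hwk : 1 < γw / αw)
    (hβ : 0 < β) (hβlt : β < (γS * αw - γw * αS) / (γw - αw))
    (hpH0 : 0 < pH) (hpH1 : pH < 1) (j k : ℕ) :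
    pH * obsProb κ β cw γw γS (j+1) k /
      (pH * obsProb κ β cw γw γS (j+1) k + (1 - pH) * obsProb κ β cw αw αS (j+1) k) <
    pH * obsProb κ β cw γw γS j k /
      (pH * obsProb κ β cw γw γS j k + (1 - pH) * obsProb κ β cw αw αS j k) := by
  have hγw : 0 < γw := lt_trans hαw hwγ
  have hγS : 0 < γS := lt_trans hαS hSγ
  have hwγ' : 0 < cw * γw := by positivity
  have hwα' : 0 < cw * αw := by positivity
  have hsγ : 0 < β + γS + cw * γw := by positivity
  have hsα : 0 < β + αS + cw * αw := by positivity
  -- Positivity of the four obsProb values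
  have Pa := obsProb_pos κ β cw γw γS hκ hβ hwγ' hγS (j+1) k
  have Pb := obsProb_pos κ β cw αw αS hκ hβ hwα' hαS (j+1) k
  have Pa' := obsProb_pos κ β cw γw γS hκ hβ hwγ' hγS j k
  have Pb' := obsProb_pos κ β cw αw αS hκ hβ hwα' hαS j k
  refine posterior_lt _ _ _ _ _ Pa Pb Pa' Pb' hpH0 hpH1 ?_
  -- key cross inequality
  set e : ℝ := κ + ((j + k : ℕ) : ℝ) with he
  have hcast : ((j + 1 + k : ℕ) : ℝ) = ((j + k : ℕ) : ℝ) + 1 := by push_cast; ring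
  have he1 : κ + ((j + 1 + k : ℕ) : ℝ) = e + 1 := by rw [hcast, he]; ring
  have hepos : 0 < e := by rw [he]; positivity
  have hu : (0:ℝ) < 1 / (β + γS + cw * γw) := by positivity
  have hv : (0:ℝ) < 1 / (β + αS + cw * αw) := by positivity
  have rp : ∀ x : ℝ, 0 < x → x ^ (e + 1) = x ^ e * x := by
    intro x hx
    rw [Real.rpow_add_one (ne_of_gt hx)]
  rw [obsProb_eq κ β cw γw γS hκ hβ hwγ' hγS (j+1) k,
    obsProb_eq κ β cw αw αS hκ hβ hwα' hαS (j+1) k,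
    obsProb_eq κ β cw γw γS hκ hβ hwγ' hγS j k,
    obsProb_eq κ β cw αw αS hκ hβ hwα' hαS j k, he1,
    rp _ hu, rp _ hv]
  -- abbreviate atoms
  have hkey : γw * (1 / (β + γS + cw * γw)) < αw * (1 / (β + αS + cw * αw)) := by
    rw [mul_one_div, mul_one_div, div_lt_div_iff₀ hsγ hsα]
    have hd : 0 < γw - αw := by linarith
    have : β * (γw - αw) < γS * αw - γw * αS := by
      rw [lt_div_iff₀ hd] at hβlt; linarith
    nlinarith
  have hM : (0:ℝ) <
      (β ^ κ / Real.Gamma κ) ^ 2 * (γS ^ k / k.factorial) * (αS ^ k / k.factorial) *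
      ((cw * γw) ^ j * (cw * αw) ^ j * cw / (((j+1).factorial : ℝ) * (j).factorial)) *
      (Real.Gamma (e + 1) * Real.Gamma e) *
      ((1 / (β + γS + cw * γw)) ^ e * (1 / (β + αS + cw * αw)) ^ e) := by
    have h1 := Real.Gamma_pos_of_pos hκ
    have h2 := Real.Gamma_pos_of_pos hepos
    have h3 := Real.Gamma_pos_of_pos (show (0:ℝ) < e + 1 by linarith)
    positivity
  calc _ = ((β ^ κ / Real.Gamma κ) ^ 2 * (γS ^ k / k.factorial) * (αS ^ k / k.factorial) *
      ((cw * γw) ^ j * (cw * αw) ^ j * cw / (((j+1).factorial : ℝ) * (j).factorial)) *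
      (Real.Gamma (e + 1) * Real.Gamma e) *
      ((1 / (β + γS + cw * γw)) ^ e * (1 / (β + αS + cw * αw)) ^ e)) *
      (γw * (1 / (β + γS + cw * γw))) := by rw [pow_succ]; ring
    _ < ((β ^ κ / Real.Gamma κ) ^ 2 * (γS ^ k / k.factorial) * (αS ^ k / k.factorial) *
      ((cw * γw) ^ j * (cw * αw) ^ j * cw / (((j+1).factorial : ℝ) * (j).factorial)) *
      (Real.Gamma (e + 1) * Real.Gamma e) *
      ((1 / (β + γS + cw * γw)) ^ e * (1 / (β + αS + cw * αw)) ^ e)) *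
      (αw * (1 / (β + αS + cw * αw))) := by
        exact mul_lt_mul_of_pos_left hkey hM
    _ = _ := by rw [pow_succ]; ring
end

section
/- Fix positive reals α_w < γ_w, α_S < γ_S with γ_S/α_S > γ_w/α_w, c_w > 0, and a nonnegative integer m. Then there exists C₀ > 0 such that for all C > C₀, γ_w/α_w < ((γ_S + c_w γ_w)/(α_S + c_w α_w)) · (Γ_ℓ(m+2, C(α_S + c_w α_w)) Γ_ℓ(m+1, C(γ_S + c_w γ_w))) / (Γ_ℓ(m+1, C(α_S + c_w α_w)) Γ_ℓ(m+2, C(γ_S + c_w γ_w))), where Γ_ℓ(b, a) = ∫₀^a e^{-x} x^{b-1} dx. -/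
open Real

/-- Lower incomplete gamma function `Γ_ℓ(b, a) = ∫₀^a e^{-x} x^{b-1} dx`. -/
noncomputable def lowerGamma (b : ℝ) (a : ℝ) : ℝ :=
  ∫ x in (0:ℝ)..a, Real.exp (-x) * x ^ (b - 1)

lemma tendsto_lowerGamma (b : ℝ) (hb : 0 < b) (k : ℝ) (hk : 0 < k) :
    Filter.Tendsto (fun C : ℝ => lowerGamma b (C * k)) Filter.atTop
      (nhds (Real.Gamma b)) := by
  rw [Real.Gamma_eq_integral hb]
  exact MeasureTheory.intervalIntegral_tendsto_integral_Ioi 0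
    (Real.GammaIntegral_convergent hb)
    (Filter.Tendsto.atTop_mul_const hk Filter.tendsto_id)

theorem uniform_prior_paradox_inequality (αw γw αS γS cw : ℝ) (m : ℕ)
    (hαw : 0 < αw) (hwγ : αw < γw) (hαS : 0 < αS) (hSγ : αS < γS) (hcw : 0 < cw)
    (hstr : γw / αw < γS / αS) :
    ∃ C₀ > (0:ℝ), ∀ C > C₀,
      γw / αw < ((γS + cw * γw) / (αS + cw * αw)) *
        (lowerGamma ((m:ℝ) + 2) (C * (αS + cw * αw)) *
          lowerGamma ((m:ℝ) + 1) (C * (γS + cw * γw))) /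
        (lowerGamma ((m:ℝ) + 1) (C * (αS + cw * αw)) *
          lowerGamma ((m:ℝ) + 2) (C * (γS + cw * γw))) := by
  set A := αS + cw * αw with hA
  set G := γS + cw * γw with hG
  have hApos : 0 < A := add_pos hαS (mul_pos hcw hαw)
  have hGpos : 0 < G := add_pos (lt_trans hαS hSγ) (mul_pos hcw (lt_trans hαw hwγ))
  have hb1 : (0:ℝ) < (m:ℝ) + 1 := by positivity
  have hb2 : (0:ℝ) < (m:ℝ) + 2 := by positivity
  have hΓ1 : 0 < Real.Gamma ((m:ℝ) + 1) := Real.Gamma_pos_of_pos hb1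
  have hΓ2 : 0 < Real.Gamma ((m:ℝ) + 2) := Real.Gamma_pos_of_pos hb2
  -- limit of the full expression is G / A
  have hlim : Filter.Tendsto
      (fun C : ℝ => (G / A) *
        (lowerGamma ((m:ℝ) + 2) (C * A) * lowerGamma ((m:ℝ) + 1) (C * G)) /
        (lowerGamma ((m:ℝ) + 1) (C * A) * lowerGamma ((m:ℝ) + 2) (C * G)))
      Filter.atTop (nhds (G / A)) := by
    have h1A := tendsto_lowerGamma _ hb1 A hApos
    have h2A := tendsto_lowerGamma _ hb2 A hApos
    have h1G := tendsto_lowerGamma _ hb1 G hGpos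
    have h2G := tendsto_lowerGamma _ hb2 G hGpos
    have := ((Filter.Tendsto.const_mul (G / A) (h2A.mul h1G)).div (h1A.mul h2G)
      (ne_of_gt (mul_pos hΓ1 hΓ2)))
    simp only [Pi.div_def] at this
    convert this using 2
    field_simp
  -- the limit is strictly bigger than γw / αw
  have hlt : γw / αw < G / A := by
    rw [div_lt_div_iff₀ hαw hApos]
    have h1 : γw * αS < γS * αw := by
      have := (div_lt_div_iff₀ hαw hαS).mp hstr
      linarith
    rw [hA, hG]; nlinarith
  have hev := hlim.eventually (eventually_gt_nhds hlt)
  rw [Filter.eventually_atTop] at hev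
  obtain ⟨a, ha⟩ := hev
  refine ⟨max a 1, lt_of_lt_of_le one_pos (le_max_right a 1), fun C hC => ?_⟩
  exact ha C (le_of_lt (lt_of_le_of_lt (le_max_left a 1) hC))
end

section
/- Let β > 0, and let a: (0, α] → [0,1] and γ: (0, α] → [0,1] satisfy a(α) = α, a(p) ≤ p, 0 ≤ a(p) ≤ a(α), 0 ≤ γ(p) < γ(α) ≤ 1, for fixed 0 < p < α < 1. Define the likelihood ratio L(j) = ((γ(α) − γ(p))/(a(α) − a(p)))^j ((β + a(α))/(β + γ(α)))^{j+κ} for κ > 0. Then L(j+1) < L(j) for all j ≥ 0 if and only if (α − a(p))·(β + γ(α)) > (γ(α) − γ(p))·(β + α); in particular this holds whenever β < (α γ(p) − p γ(α))/((γ(α) − γ(p)) − (α − p)) and the denominator of this bound is positive, using a(p) ≤ p. -/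
open Real

theorem homogeneous_paradox (κ β p α : ℝ) (a γ : ℝ → ℝ)
    (hκ : 0 < κ) (hβ : 0 < β) (hp : 0 < p) (hpα : p < α) (hα : α < 1)
    (haα : a α = α) (hap : a p ≤ p) (hap0 : 0 ≤ a p) (hapα : a p ≤ a α)
    (hγp0 : 0 ≤ γ p) (hγpα : γ p < γ α) (hγα1 : γ α ≤ 1) :
    ((∀ j : ℕ,
        ((γ α - γ p) / (a α - a p)) ^ (j+1) *
          ((β + a α) / (β + γ α)) ^ ((j:ℝ) + 1 + κ) <
        ((γ α - γ p) / (a α - a p)) ^ j *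
          ((β + a α) / (β + γ α)) ^ ((j:ℝ) + κ))
      ↔ (γ α - γ p) * (β + α) < (α - a p) * (β + γ α)) ∧
    (0 < (γ α - γ p) - (α - p) →
      β < (α * γ p - p * γ α) / ((γ α - γ p) - (α - p)) →
      ∀ j : ℕ,
        ((γ α - γ p) / (a α - a p)) ^ (j+1) *
          ((β + a α) / (β + γ α)) ^ ((j:ℝ) + 1 + κ) <
        ((γ α - γ p) / (a α - a p)) ^ j *
          ((β + a α) / (β + γ α)) ^ ((j:ℝ) + κ)) := by
  have hga : 0 < γ α - γ p := by linarith
  have haa : 0 < a α - a p := by rw [haα]; linarith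
  have hβγ : 0 < β + γ α := by linarith
  have hβa : 0 < β + a α := by rw [haα]; linarith
  have hrpos : 0 < (γ α - γ p) / (a α - a p) := div_pos hga haa
  have hspos : 0 < (β + a α) / (β + γ α) := div_pos hβa hβγ
  have key2 : (γ α - γ p) / (a α - a p) * ((β + a α) / (β + γ α)) < 1 ↔
      (γ α - γ p) * (β + α) < (α - a p) * (β + γ α) := by
    rw [div_mul_div_comm, div_lt_one (mul_pos haa hβγ), haα]
  have key : ∀ j : ℕ,
      (((γ α - γ p) / (a α - a p)) ^ (j+1) *
        ((β + a α) / (β + γ α)) ^ ((j:ℝ) + 1 + κ) <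
      ((γ α - γ p) / (a α - a p)) ^ j *
        ((β + a α) / (β + γ α)) ^ ((j:ℝ) + κ)) ↔
      (γ α - γ p) / (a α - a p) * ((β + a α) / (β + γ α)) < 1 := by
    intro j
    have h1 : ((j:ℝ) + 1 + κ) = ((j:ℝ) + κ) + 1 := by ring
    rw [h1, Real.rpow_add_one (ne_of_gt hspos), pow_succ]
    have hpos : 0 < ((γ α - γ p) / (a α - a p)) ^ j *
        ((β + a α) / (β + γ α)) ^ ((j:ℝ) + κ) :=
      mul_pos (pow_pos hrpos j) (Real.rpow_pos_of_pos hspos _)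
    rw [show ((γ α - γ p) / (a α - a p)) ^ j * ((γ α - γ p) / (a α - a p)) *
        (((β + a α) / (β + γ α)) ^ ((j:ℝ) + κ) * ((β + a α) / (β + γ α))) =
        (((γ α - γ p) / (a α - a p)) ^ j * ((β + a α) / (β + γ α)) ^ ((j:ℝ) + κ)) *
        ((γ α - γ p) / (a α - a p) * ((β + a α) / (β + γ α))) from by ring]
    exact mul_lt_iff_lt_one_right hpos
  constructor
  · constructor
    · intro h; exact key2.mp ((key 0).mp (h 0))
    · intro h j; exact (key j).mpr (key2.mpr h)
  · intro hD hβlt j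
    apply (key j).mpr
    apply key2.mpr
    have h1 : β * ((γ α - γ p) - (α - p)) < α * γ p - p * γ α :=
      (lt_div_iff₀ hD).mp hβlt
    have h2 : (α - p) * (β + γ α) ≤ (α - a p) * (β + γ α) :=
      mul_le_mul_of_nonneg_right (by linarith) (le_of_lt hβγ)
    nlinarith [h1, h2]
end

section
/- For 0 < α < γ ≤ 1, c_w > 0, β > 0, the quantity (γ/α)·((β + α_S)(β + α_S + c_w α)) / ((β + γ_S)(β + γ_S + c_w γ)) with 0 < α_S < γ_S ≤ 1 is strictly increasing in β. -/
theorem bayes_factor_strictMonoOn (α γ αS γS cw : ℝ)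
    (hα : 0 < α) (hαγ : α < γ) (hγ1 : γ ≤ 1)
    (hαS : 0 < αS) (hSγ : αS < γS) (hγS1 : γS ≤ 1) (hcw : 0 < cw) :
    StrictMonoOn (fun β : ℝ =>
      (γ / α) * ((β + αS) * (β + αS + cw * α)) / ((β + γS) * (β + γS + cw * γ)))
      (Set.Ioi 0) := by
  intro x hx y hy hxy
  simp only [Set.mem_Ioi] at hx hy
  have hA1 : (0:ℝ) < x + αS := by linarith
  have hA2 : (0:ℝ) < x + αS + cw * α := by positivity
  have hA1' : (0:ℝ) < y + αS := by linarith
  have hA2' : (0:ℝ) < y + αS + cw * α := by positivity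
  have hB1 : (0:ℝ) < x + γS := by linarith
  have hB2 : (0:ℝ) < x + γS + cw * γ := by nlinarith
  have hB1' : (0:ℝ) < y + γS := by linarith
  have hB2' : (0:ℝ) < y + γS + cw * γ := by nlinarith
  have hC : (0:ℝ) < γ / α := div_pos (by linarith) hα
  simp only
  rw [div_lt_div_iff₀ (mul_pos hB1 hB2) (mul_pos hB1' hB2')]
  have h1 : (x + αS) * (y + γS) < (y + αS) * (x + γS) := by nlinarith
  have h2 : (x + αS + cw * α) * (y + γS + cw * γ) <
      (y + αS + cw * α) * (x + γS + cw * γ) := by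
    nlinarith [mul_pos (sub_pos.2 hxy) (sub_pos.2 hSγ),
      mul_pos (sub_pos.2 hxy) (mul_pos hcw (sub_pos.2 hαγ))]
  have key : ((x + αS) * (x + αS + cw * α)) * ((y + γS) * (y + γS + cw * γ)) <
      ((y + αS) * (y + αS + cw * α)) * ((x + γS) * (x + γS + cw * γ)) := by
    calc ((x + αS) * (x + αS + cw * α)) * ((y + γS) * (y + γS + cw * γ))
        = ((x + αS) * (y + γS)) * ((x + αS + cw * α) * (y + γS + cw * γ)) := by ring
      _ < ((y + αS) * (x + γS)) * ((y + αS + cw * α) * (x + γS + cw * γ)) := by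
          apply mul_lt_mul' h1.le h2 (by positivity) (by positivity)
      _ = ((y + αS) * (y + αS + cw * α)) * ((x + γS) * (x + γS + cw * γ)) := by ring
  nlinarith [mul_lt_mul_of_pos_left key hC]
end
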